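/- Let X be a real Hilbert space, let A : X ⇉ X be maximally monotone, and let x, x* ∈ X. If x ∈ dom A, then C_{A,γ}(x,x*) = ‖x − J_{γA}(x + γx*)‖²/γ tends to 0 as γ → 0⁺. -/

import Mathlib

open scoped RealInnerProductSpace Topology

/-- A set-valued operator `A : X ⇉ X` is maximally monotone. -/
def IsMaxMonotone {X : Type*} [NormedAddCommGroup X] [InnerProductSpace ℝ X]
    (A : X → Set X) : Prop :=
  (∀ a as b bs, as ∈ A a → bs ∈ A b → 0 ≤ ⟪a - b, as - bs⟫) ∧
  (∀ z zs, (∀ a as, as ∈ A a → 0 ≤ ⟪z - a, zs - as⟫) → zs ∈ A z)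

/-- `J` is the resolvent `J_{γA} = (Id + γA)⁻¹`:
`J z = p` if and only if `z ∈ p + γ A p`, i.e. `γ⁻¹ • (z - p) ∈ A p`. -/
def IsResolvent {X : Type*} [NormedAddCommGroup X] [InnerProductSpace ℝ X]
    (A : X → Set X) (γ : ℝ) (J : X → X) : Prop :=
  ∀ z p, J z = p ↔ γ⁻¹ • (z - p) ∈ A p

theorem stmt_13 {X : Type*} [NormedAddCommGroup X] [InnerProductSpace ℝ X] [CompleteSpace X]
    (A : X → Set X) (hA : IsMaxMonotone A) (x xs : X)
    (J : ℝ → X → X) (hJ : ∀ γ : ℝ, 0 < γ → IsResolvent A γ (J γ))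
    (hx : (A x).Nonempty) :
    Filter.Tendsto (fun γ : ℝ => ‖x - J γ (x + γ • xs)‖ ^ 2 / γ)
      (𝓝[>] 0) (𝓝 0) := by
  obtain ⟨a, ha⟩ := hx
  apply squeeze_zero' (g := fun γ : ℝ => γ * ‖a - xs‖ ^ 2)
  · filter_upwards [self_mem_nhdsWithin] with γ (hγ : (0:ℝ) < γ)
    positivity
  · filter_upwards [self_mem_nhdsWithin] with γ (hγ : (0:ℝ) < γ)
    set z := x + γ • xs with hz
    set p := J γ z with hp
    have hmem : γ⁻¹ • (z - p) ∈ A p := (hJ γ hγ z p).mp rfl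
    have hmono := hA.1 x a p _ ha hmem
    have h1 : a - γ⁻¹ • (z - p) = (a - xs) - γ⁻¹ • (x - p) := by
      have hzp : z - p = (x - p) + γ • xs := by rw [hz]; abel
      rw [hzp, smul_add, smul_smul, inv_mul_cancel₀ hγ.ne', one_smul]
      abel
    rw [h1, inner_sub_right] at hmono
    have h2 : ⟪x - p, γ⁻¹ • (x - p)⟫ = γ⁻¹ * ‖x - p‖ ^ 2 := by
      rw [real_inner_smul_right, real_inner_self_eq_norm_sq]
    rw [h2] at hmono
    have hcs : ⟪x - p, a - xs⟫ ≤ ‖x - p‖ * ‖a - xs‖ := real_inner_le_norm _ _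
    have key : ‖x - p‖ ^ 2 ≤ γ * (‖x - p‖ * ‖a - xs‖) := by
      have : γ⁻¹ * ‖x - p‖ ^ 2 ≤ ‖x - p‖ * ‖a - xs‖ := by linarith
      calc ‖x - p‖ ^ 2 = γ * (γ⁻¹ * ‖x - p‖ ^ 2) := by
            field_simp
        _ ≤ γ * (‖x - p‖ * ‖a - xs‖) := by
            exact mul_le_mul_of_nonneg_left this hγ.le
    rw [div_le_iff₀ hγ]
    have hnp : (0:ℝ) ≤ ‖x - p‖ := norm_nonneg _
    have hC : (0:ℝ) ≤ ‖a - xs‖ := norm_nonneg _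
    nlinarith [sq_nonneg (‖x - p‖ - γ * ‖a - xs‖)]
  · have : Filter.Tendsto (fun γ : ℝ => γ * ‖a - xs‖ ^ 2) (𝓝 0) (𝓝 0) := by
      simpa using (show Continuous fun γ : ℝ => γ * ‖a - xs‖ ^ 2 from continuous_id.mul continuous_const).tendsto (0:ℝ)
    exact this.mono_left nhdsWithin_le_nhds
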